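/- Let r ≥ 1 be an integer, let f_r(x) = sign(sin(0.5·π·(r+1)·(x+1))) where sign(z) = 1 if z > 0 and −1 otherwise, and let ℓ be either the exponential loss ℓ(q) = e^{−q} or the logistic loss ℓ(q) = log(1+e^{−q}). Let β₁ ≤ β₂ be points in [−1,1] and let N : [β₁,β₂] → ℝ be a function whose sign is fixed on [β₁,β₂] (i.e., sign(N(x)) is the same for all x ∈ [β₁,β₂]). Then ∫_{β₁}^{β₂} ℓ(N(x)·f_r(x)) dx ≥ ½·ℓ(0)·(β₂ − β₁ − 2/(r+1)). -/

import Mathlib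

open MeasureTheory

/-- `sgn z = 1` if `z > 0` and `-1` otherwise. -/
noncomputable def sgn (z : ℝ) : ℝ := if 0 < z then 1 else -1

/-- `f_r(x) = sign(sin(0.5 π (r+1) (x+1)))`. -/
noncomputable def fr (r : ℕ) (x : ℝ) : ℝ :=
  sgn (Real.sin (0.5 * Real.pi * (r + 1) * (x + 1)))

/-- If `ℓ` is the exponential or logistic loss and `N` has a fixed sign on
`[β₁, β₂] ⊆ [-1, 1]`, then `∫_{β₁}^{β₂} ℓ(N(x) f_r(x)) dx ≥ ½ ℓ(0) (β₂ - β₁ - 2/(r+1))`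
(stated with the lower Lebesgue integral). -/
theorem stmt11 (r : ℕ) (hr : 1 ≤ r) (l : ℝ → ℝ)
    (hl : (∀ q, l q = Real.exp (-q)) ∨ (∀ q, l q = Real.log (1 + Real.exp (-q))))
    (β₁ β₂ : ℝ) (hβ : β₁ ≤ β₂) (hβ₁ : -1 ≤ β₁) (hβ₂ : β₂ ≤ 1)
    (N : ℝ → ℝ)
    (hsign : ∀ x ∈ Set.Icc β₁ β₂, ∀ x' ∈ Set.Icc β₁ β₂, sgn (N x) = sgn (N x')) :
    ENNReal.ofReal (1 / 2 * l 0 * (β₂ - β₁ - 2 / (r + 1))) ≤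
      ∫⁻ x in Set.Icc β₁ β₂, ENNReal.ofReal (l (N x * fr r x)) := by
  have hl0 : 0 ≤ l 0 := by
    rcases hl with hl | hl
    · rw [hl]; positivity
    · rw [hl]; exact Real.log_nonneg (by linarith [Real.exp_pos (-(0:ℝ))])
  have hmono : ∀ q : ℝ, q ≤ 0 → l 0 ≤ l q := by
    intro q hq
    rcases hl with hl | hl
    · rw [hl, hl]; exact Real.exp_le_exp.mpr (by linarith)
    · rw [hl, hl]
      have h1 : Real.exp (-0) ≤ Real.exp (-q) := Real.exp_le_exp.mpr (by linarith)
      exact Real.log_le_log (by positivity) (by linarith)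
  set h : ℝ := 2 / ((r : ℝ) + 1) with hh_def
  have hrpos : (0:ℝ) < (r:ℝ) + 1 := by positivity
  have hhpos : 0 < h := by positivity
  by_cases hδ : β₂ - β₁ - h ≤ 0
  · have : 1 / 2 * l 0 * (β₂ - β₁ - h) ≤ 0 :=
      mul_nonpos_of_nonneg_of_nonpos (by positivity) hδ
    rw [ENNReal.ofReal_eq_zero.mpr this]
    exact zero_le
  push_neg at hδ
  set c : ℝ := 0.5 * Real.pi * ((r : ℝ) + 1) with hc_def
  have hcpos : 0 < c := by
    have := Real.pi_pos
    rw [hc_def]; positivity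
  have hch : c * h = Real.pi := by
    rw [hc_def, hh_def]; field_simp; ring
  have hfr : ∀ x : ℝ, fr r x = sgn (Real.sin (c * (x + 1))) := fun x => rfl
  set s : ℝ := sgn (N β₁) with hs_def
  have hsval : s = 1 ∨ s = -1 := by
    rw [hs_def, sgn]; split <;> simp
  have hs1 : ∀ x ∈ Set.Icc β₁ β₂, sgn (N x) = s :=
    fun x hx => hsign x hx β₁ ⟨le_refl _, hβ⟩
  set B : Set ℝ := Set.Icc β₁ β₂ ∩ {x | s * Real.sin (c * (x + 1)) < 0} with hB_def
  set C : Set ℝ := Set.Icc β₁ β₂ ∩ {x | 0 < s * Real.sin (c * (x + 1))} with hC_def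
  have hBmeas : MeasurableSet B :=
    measurableSet_Icc.inter (measurableSet_lt (by fun_prop) measurable_const)
  -- pointwise bound on B
  have hpt : ∀ x ∈ B, ENNReal.ofReal (l 0) ≤ ENNReal.ofReal (l (N x * fr r x)) := by
    rintro x ⟨hxI, hxg⟩
    apply ENNReal.ofReal_le_ofReal
    apply hmono
    have hsx := hs1 x hxI
    simp only [Set.mem_setOf_eq] at hxg
    by_cases hN : 0 < N x
    · have hs : s = 1 := by rw [← hsx, sgn, if_pos hN]
      rw [hs, one_mul] at hxg
      have hfx : fr r x = -1 := by rw [hfr, sgn, if_neg (not_lt.mpr hxg.le)]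
      rw [hfx]; nlinarith
    · have hs : s = -1 := by rw [← hsx, sgn, if_neg hN]
      rw [hs] at hxg
      have hg : 0 < Real.sin (c * (x + 1)) := by nlinarith
      have hfx : fr r x = 1 := by rw [hfr, sgn, if_pos hg]
      rw [hfx, mul_one]; exact not_lt.mp hN
  -- zero set has measure zero
  have hZ0 : volume {x : ℝ | Real.sin (c * (x + 1)) = 0} = 0 := by
    have hsub : {x : ℝ | Real.sin (c * (x + 1)) = 0} ⊆
        Set.range (fun n : ℤ => (n : ℝ) * Real.pi / c - 1) := by
      intro x hx
      rw [Set.mem_setOf_eq, Real.sin_eq_zero_iff] at hx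
      obtain ⟨n, hn⟩ := hx
      refine ⟨n, ?_⟩
      have hcne : c ≠ 0 := ne_of_gt hcpos
      field_simp
      linarith [hn]
    exact measure_mono_null hsub ((Set.countable_range _).measure_zero _)
  have hsne : s ≠ 0 := by rcases hsval with h' | h' <;> rw [h'] <;> norm_num
  have hcover : Set.Icc β₁ β₂ ⊆ B ∪ C ∪ {x | Real.sin (c * (x + 1)) = 0} := by
    intro x hx
    rcases lt_trichotomy (s * Real.sin (c * (x + 1))) 0 with h' | h' | h'
    · exact Or.inl (Or.inl ⟨hx, h'⟩)
    · exact Or.inr ((mul_eq_zero.mp h').resolve_left hsne)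
    · exact Or.inl (Or.inr ⟨hx, h'⟩)
  have hIcc : volume (Set.Icc β₁ β₂) ≤ volume B + volume C :=
    calc volume (Set.Icc β₁ β₂)
        ≤ volume (B ∪ C ∪ {x | Real.sin (c * (x + 1)) = 0}) := measure_mono hcover
      _ ≤ volume (B ∪ C) + volume {x | Real.sin (c * (x + 1)) = 0} := measure_union_le _ _
      _ = volume (B ∪ C) := by rw [hZ0, add_zero]
      _ ≤ volume B + volume C := measure_union_le _ _
  have hCB : volume C ≤ volume B + ENNReal.ofReal h := by
    have hCsub : C ⊆ ((fun x => x + h) ⁻¹' B) ∪ Set.Ioc (β₂ - h) β₂ := by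
      rintro x ⟨⟨hx1, hx2⟩, hxg⟩
      simp only [Set.mem_setOf_eq] at hxg
      by_cases hx3 : x ≤ β₂ - h
      · left
        show x + h ∈ B
        refine ⟨⟨by linarith, by linarith⟩, ?_⟩
        have hgsin : Real.sin (c * (x + h + 1)) = -Real.sin (c * (x + 1)) := by
          rw [show c * (x + h + 1) = c * (x + 1) + Real.pi by rw [← hch]; ring,
            Real.sin_add_pi]
        simp only [Set.mem_setOf_eq]
        rw [hgsin, mul_neg]
        linarith
      · exact Or.inr ⟨by linarith, hx2⟩
    calc volume C ≤ volume ((fun x => x + h) ⁻¹' B) + volume (Set.Ioc (β₂ - h) β₂) :=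
          le_trans (measure_mono hCsub) (measure_union_le _ _)
      _ = volume B + ENNReal.ofReal h := by
          rw [measure_preimage_add_right volume h B, Real.volume_Ioc,
            show β₂ - (β₂ - h) = h by ring]
  have h2 : ENNReal.ofReal (β₂ - β₁) ≤ 2 * volume B + ENNReal.ofReal h :=
    calc ENNReal.ofReal (β₂ - β₁) = volume (Set.Icc β₁ β₂) := (Real.volume_Icc).symm
      _ ≤ volume B + volume C := hIcc
      _ ≤ volume B + (volume B + ENNReal.ofReal h) := add_le_add le_rfl hCB
      _ = 2 * volume B + ENNReal.ofReal h := by ring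
  have h3 : ENNReal.ofReal (β₂ - β₁ - h) ≤ 2 * volume B := by
    have hsplit : ENNReal.ofReal (β₂ - β₁) =
        ENNReal.ofReal (β₂ - β₁ - h) + ENNReal.ofReal h := by
      rw [← ENNReal.ofReal_add (by linarith) hhpos.le]
      congr 1; ring
    rw [hsplit] at h2
    exact (ENNReal.add_le_add_iff_right ENNReal.ofReal_ne_top).mp h2
  have hvolB : ENNReal.ofReal ((β₂ - β₁ - h) / 2) ≤ volume B := by
    have h4 : ENNReal.ofReal (β₂ - β₁ - h) = 2 * ENNReal.ofReal ((β₂ - β₁ - h) / 2) := by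
      rw [show (2 : ENNReal) = ENNReal.ofReal 2 by norm_num,
        ← ENNReal.ofReal_mul (by norm_num)]
      congr 1; ring
    rw [h4] at h3
    exact (ENNReal.mul_le_mul_iff_right (by norm_num) (by norm_num)).mp h3
  calc ENNReal.ofReal (1 / 2 * l 0 * (β₂ - β₁ - h))
      = ENNReal.ofReal (l 0) * ENNReal.ofReal ((β₂ - β₁ - h) / 2) := by
        rw [← ENNReal.ofReal_mul hl0]; congr 1; ring
    _ ≤ ENNReal.ofReal (l 0) * volume B := mul_le_mul_right hvolB _
    _ = ∫⁻ _ in B, ENNReal.ofReal (l 0) := (setLIntegral_const _ _).symm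
    _ ≤ ∫⁻ x in B, ENNReal.ofReal (l (N x * fr r x)) := setLIntegral_mono' hBmeas hpt
    _ ≤ ∫⁻ x in Set.Icc β₁ β₂, ENNReal.ofReal (l (N x * fr r x)) :=
        lintegral_mono_set Set.inter_subset_left
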